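/- For all real numbers T, α, β, γ, K, C > 0 with γ < β/α there exists a function A : [0,∞) → [0,1] with lim_{M→∞} A(M) = 0 and with the following property: for every n ≥ 1 and every ℝⁿ-valued stochastic process (X_t)_{t∈[0,T]} on a probability space satisfying E[|X_ت − X_s|^α] ≤ K·|t−s|^{1+β} for all s, t ∈ [0,T] (with the Euclidean norm |·| on ℝⁿ) and E[ sup_{t∈[0,T]∩D} |X_t| ] ≤ C, where D denotes the set of dyadic rational numbers, there exists a modification (X̃_t)_{t∈[0,T]} of X (i.e. P(X̃_t = X_t) = 1 for every t ∈ [0,T]) whose sample paths are almost surely γ-Hölder continuous, and such that P( ‖X̃‖_γ > M ) ≤ A(M) for every M ≥ 0, where ‖X̃‖_γ := |X̃_0| + sup_{0≤s<t≤T} |X̃_t − X̃_s| / (t−s)^γ. -/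

import Mathlib

open MeasureTheory Filter
open scoped ENNReal

noncomputable def eNorm {n : ℕ} (x : Fin n → ℝ) : ℝ := Real.sqrt (∑ i, x i ^ 2)

/-- The set of dyadic rational numbers. -/
def dyadics : Set ℝ := {t : ℝ | ∃ k : ℤ, ∃ j : ℕ, t = (k : ℝ) / 2 ^ j}

lemma eNorm_eq_norm {n : ℕ} (x : Fin n → ℝ) :
    eNorm x = ‖(WithLp.equiv 2 (Fin n → ℝ)).symm x‖ := by
  rw [EuclideanSpace.norm_eq]
  unfold eNorm
  simp [WithLp.equiv_symm_apply, PiLp.toLp_apply, Real.sqrt_eq_rpow, sq_abs]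

lemma eNorm_nonneg {n : ℕ} (x : Fin n → ℝ) : 0 ≤ eNorm x := Real.sqrt_nonneg _

lemma eNorm_sub_comm {n : ℕ} (x y : Fin n → ℝ) : eNorm (x - y) = eNorm (y - x) := by
  rw [eNorm_eq_norm, eNorm_eq_norm]; exact norm_sub_rev _ _

lemma eNorm_triangle {n : ℕ} (x y z : Fin n → ℝ) :
    eNorm (x - z) ≤ eNorm (x - y) + eNorm (y - z) := by
  rw [eNorm_eq_norm, eNorm_eq_norm, eNorm_eq_norm]
  exact norm_sub_le_norm_sub_add_norm_sub _ _ _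

lemma eNorm_zero {n : ℕ} : eNorm (0 : Fin n → ℝ) = 0 := by rw [eNorm_eq_norm]; simp

lemma dist_le_eNorm {n : ℕ} (x y : Fin n → ℝ) : dist x y ≤ eNorm (x - y) := by
  rw [dist_pi_le_iff (eNorm_nonneg _)]
  intro i
  have h1 : dist (x i) (y i) = Real.sqrt ((x i - y i) ^ 2) := by
    rw [Real.sqrt_sq_eq_abs, Real.dist_eq]
  rw [h1]
  apply Real.sqrt_le_sqrt
  have h2 : (x - y) i = x i - y i := rfl
  calc (x i - y i) ^ 2 = (x - y) i ^ 2 := by rw [h2]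
    _ ≤ ∑ j, (x - y) j ^ 2 :=
      Finset.single_le_sum (f := fun j => (x - y) j ^ 2) (fun j _ => sq_nonneg _)
        (Finset.mem_univ i)

section Grid
set_option linter.unusedSectionVars false
variable {n : ℕ} {Ω : Type*} [MeasurableSpace Ω]

/-- increment "distance" -/
noncomputable def Dd (X : ℝ → Ω → Fin n → ℝ) (u v : ℝ) (ω : Ω) : ℝ≥0∞ :=
  ENNReal.ofReal (eNorm (X v ω - X u ω))

lemma Dd_self (X : ℝ → Ω → Fin n → ℝ) (u : ℝ) (ω : Ω) : Dd X u u ω = 0 := by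
  simp [Dd, eNorm_zero]

lemma Dd_symm (X : ℝ → Ω → Fin n → ℝ) (u v : ℝ) (ω : Ω) : Dd X u v ω = Dd X v u ω := by
  simp [Dd, eNorm_sub_comm]

lemma Dd_triangle (X : ℝ → Ω → Fin n → ℝ) (u v w : ℝ) (ω : Ω) :
    Dd X u w ω ≤ Dd X u v ω + Dd X v w ω := by
  simp only [Dd]
  rw [← ENNReal.ofReal_add (eNorm_nonneg _) (eNorm_nonneg _)]
  exact ENNReal.ofReal_le_ofReal
    (by rw [add_comm]; exact eNorm_triangle (X w ω) (X v ω) (X u ω))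

/-- max increment at dyadic level `j` -/
noncomputable def xi (T : ℝ) (X : ℝ → Ω → Fin n → ℝ) (j : ℕ) (ω : Ω) : ℝ≥0∞ :=
  ⨆ (k : ℕ) (_ : k < ⌊T * 2 ^ j⌋₊), Dd X ((k : ℝ) / 2 ^ j) (((k : ℝ) + 1) / 2 ^ j) ω

lemma grid_le_xi (T : ℝ) (X : ℝ → Ω → Fin n → ℝ) {j k : ℕ} (hk : k < ⌊T * 2 ^ j⌋₊) (ω : Ω) :
    Dd X ((k : ℝ) / 2 ^ j) (((k : ℝ) + 1) / 2 ^ j) ω ≤ xi T X j ω :=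
  le_iSup₂ (f := fun (k : ℕ) (_ : k < ⌊T * 2 ^ j⌋₊) =>
    Dd X ((k : ℝ) / 2 ^ j) (((k : ℝ) + 1) / 2 ^ j) ω) k hk

/-- weighted sum of level increments -/
noncomputable def Zp (T γ : ℝ) (X : ℝ → Ω → Fin n → ℝ) (ω : Ω) : ℝ≥0∞ :=
  ∑' j : ℕ, ENNReal.ofReal ((2 : ℝ) ^ ((j : ℝ) * γ)) * xi T X j ω

/-- tail sums -/
noncomputable def Sm (T : ℝ) (X : ℝ → Ω → Fin n → ℝ) (m : ℕ) (ω : Ω) : ℝ≥0∞ :=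
  ∑' i : ℕ, xi T X (m + i) ω

/-- dyadic approximation from below -/
noncomputable def gr (m : ℕ) (r : ℝ) : ℝ := (⌊r * 2 ^ m⌋₊ : ℝ) / 2 ^ m

lemma gr_nonneg (m : ℕ) (r : ℝ) : 0 ≤ gr m r := by unfold gr; positivity

lemma gr_le {r : ℝ} (hr : 0 ≤ r) (m : ℕ) : gr m r ≤ r := by
  rw [gr, div_le_iff₀ (by positivity)]
  exact Nat.floor_le (by positivity)

lemma le_gr_add (m : ℕ) (r : ℝ) : r ≤ gr m r + ((2 : ℝ) ^ m)⁻¹ := by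
  have h2 : (0:ℝ) < 2 ^ m := by positivity
  have h := (Nat.lt_floor_add_one (r * 2 ^ m)).le
  calc r = (r * 2 ^ m) / 2 ^ m := by field_simp
    _ ≤ ((⌊r * 2 ^ m⌋₊ : ℝ) + 1) / 2 ^ m := by gcongr
    _ = gr m r + ((2 : ℝ) ^ m)⁻¹ := by rw [gr]; field_simp

end Grid

section Chain
variable {n : ℕ} {Ω : Type*} [MeasurableSpace Ω] (X : ℝ → Ω → Fin n → ℝ)
set_option linter.unusedSectionVars false

lemma gr_stab {a p J : ℕ} (h : p ≤ J) : gr J ((a : ℝ) / 2 ^ p) = (a : ℝ) / 2 ^ p := by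
  obtain ⟨d, rfl⟩ := Nat.exists_eq_add_of_le h
  have h1 : ((a : ℝ) / 2 ^ p) * 2 ^ (p + d) = ((a * 2 ^ d : ℕ) : ℝ) := by
    push_cast; rw [pow_add]; field_simp
  rw [gr, h1, Nat.floor_natCast]
  push_cast; rw [pow_add]; field_simp

lemma gr_step {T r : ℝ} (hr0 : 0 ≤ r) (hrT : r ≤ T) (m : ℕ) (ω : Ω) :
    Dd X (gr m r) (gr (m + 1) r) ω ≤ xi T X (m + 1) ω := by
  set k := ⌊r * 2 ^ m⌋₊ with hk
  have hp : (0 : ℝ) < 2 ^ m := by positivity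
  have hfl : (k : ℝ) ≤ r * 2 ^ m := Nat.floor_le (by positivity)
  have hfu : r * 2 ^ m < (k : ℝ) + 1 := Nat.lt_floor_add_one _
  have h1 : 2 * k ≤ ⌊r * 2 ^ (m + 1)⌋₊ := by
    apply Nat.le_floor
    push_cast
    rw [pow_succ]
    nlinarith
  have h2 : ⌊r * 2 ^ (m + 1)⌋₊ < 2 * k + 2 := by
    rw [Nat.floor_lt (by positivity)]
    push_cast
    rw [pow_succ]
    nlinarith
  have hTk : ⌊r * 2 ^ (m + 1)⌋₊ ≤ ⌊T * 2 ^ (m + 1)⌋₊ :=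
    Nat.floor_le_floor (by
      have h' : (0:ℝ) < 2 ^ (m+1) := by positivity
      nlinarith)
  rcases (by omega : ⌊r * 2 ^ (m + 1)⌋₊ = 2 * k ∨ ⌊r * 2 ^ (m + 1)⌋₊ = 2 * k + 1) with h | h
  · have he : gr (m + 1) r = gr m r := by
      rw [gr, gr, h, ← hk]
      push_cast
      rw [pow_succ]
      field_simp
    rw [he, Dd_self]
    exact zero_le
  · have hlt : 2 * k < ⌊T * 2 ^ (m + 1)⌋₊ := by omega
    have e1 : gr m r = ((2 * k : ℕ) : ℝ) / 2 ^ (m + 1) := by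
      rw [gr, ← hk]; push_cast; rw [pow_succ]; field_simp
    have e2 : gr (m + 1) r = (((2 * k : ℕ) : ℝ) + 1) / 2 ^ (m + 1) := by
      rw [gr, h]; push_cast; ring
    rw [e1, e2]
    exact grid_le_xi T X hlt ω

lemma chain_base {T : ℝ} (m : ℕ) (ω : Ω) : ∀ b a : ℕ, a ≤ b → b ≤ ⌊T * 2 ^ m⌋₊ →
    Dd X ((a : ℝ) / 2 ^ m) ((b : ℝ) / 2 ^ m) ω ≤ (b - a : ℕ) * xi T X m ω := by
  intro b
  induction b with
  | zero =>
    intro a ha _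
    interval_cases a
    simp [Dd_self]
  | succ b ih =>
    intro a ha hb
    rcases Nat.eq_or_lt_of_le ha with rfl | h
    · simp [Dd_self]
    · have ha' : a ≤ b := by omega
      have hbx : Dd X ((b : ℝ) / 2 ^ m) (((b + 1 : ℕ) : ℝ) / 2 ^ m) ω ≤ xi T X m ω := by
        have := grid_le_xi T X (j := m) (k := b) (by omega) ω
        convert this using 3
        push_cast; ring
      calc Dd X ((a : ℝ) / 2 ^ m) (((b + 1 : ℕ) : ℝ) / 2 ^ m) ω
          ≤ Dd X ((a : ℝ) / 2 ^ m) ((b : ℝ) / 2 ^ m) ω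
            + Dd X ((b : ℝ) / 2 ^ m) (((b + 1 : ℕ) : ℝ) / 2 ^ m) ω := Dd_triangle _ _ _ _ _
        _ ≤ (b - a : ℕ) * xi T X m ω + 1 * xi T X m ω := by
            rw [one_mul]
            exact add_le_add (ih a ha' (by omega)) hbx
        _ = (b + 1 - a : ℕ) * xi T X m ω := by
            rw [← add_mul]
            congr 1
            have : (b + 1 - a : ℕ) = (b - a : ℕ) + 1 := by omega
            rw [this]; push_cast; ring

lemma chain_main {T u v : ℝ} (h0u : 0 ≤ u) (huv : u ≤ v) (hvT : v ≤ T) (m : ℕ) (ω : Ω) :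
    ∀ J : ℕ, Dd X (gr (m + J) u) (gr (m + J) v) ω ≤
      (⌊v * 2 ^ m⌋₊ - ⌊u * 2 ^ m⌋₊ : ℕ) * xi T X m ω
        + 2 * ∑ i ∈ Finset.range J, xi T X (m + 1 + i) ω := by
  have h0v : 0 ≤ v := le_trans h0u huv
  have hp : ∀ j : ℕ, (0:ℝ) < 2 ^ j := fun j => by positivity
  intro J
  induction J with
  | zero =>
    simp only [Nat.add_zero, Finset.range_zero, Finset.sum_empty, mul_zero, add_zero]
    exact chain_base X m ω _ _ (Nat.floor_le_floor (by nlinarith [hp m]))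
      (Nat.floor_le_floor (by nlinarith [hp m]))
  | succ J ih =>
    have hstep_u := gr_step X h0u (le_trans huv hvT) (m := m + J) ω
    have hstep_v := gr_step X h0v hvT (m := m + J) ω
    calc Dd X (gr (m + (J + 1)) u) (gr (m + (J + 1)) v) ω
        ≤ Dd X (gr (m + (J + 1)) u) (gr (m + J) u) ω
          + (Dd X (gr (m + J) u) (gr (m + J) v) ω
            + Dd X (gr (m + J) v) (gr (m + (J + 1)) v) ω) := by
          refine (Dd_triangle X _ (gr (m + J) u) _ ω).trans ?_
          exact add_le_add_right (Dd_triangle X _ (gr (m + J) v) _ ω) _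
      _ ≤ xi T X (m + J + 1) ω
          + (((⌊v * 2 ^ m⌋₊ - ⌊u * 2 ^ m⌋₊ : ℕ)) * xi T X m ω
            + 2 * ∑ i ∈ Finset.range J, xi T X (m + 1 + i) ω
            + xi T X (m + J + 1) ω) := by
          refine add_le_add ?_ (add_le_add ih ?_)
          · rw [Dd_symm]
            exact (by exact_mod_cast hstep_u : _)
          · exact (by exact_mod_cast hstep_v : _)
      _ = (⌊v * 2 ^ m⌋₊ - ⌊u * 2 ^ m⌋₊ : ℕ) * xi T X m ω
          + 2 * ∑ i ∈ Finset.range (J + 1), xi T X (m + 1 + i) ω := by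
          rw [Finset.sum_range_succ]
          have : m + 1 + J = m + J + 1 := by omega
          rw [this]
          ring

end Chain

section Holder
variable {n : ℕ} {Ω : Type*} [MeasurableSpace Ω] (X : ℝ → Ω → Fin n → ℝ)
set_option linter.unusedSectionVars false

lemma dyadic_pair {T u v : ℝ} {a p b q : ℕ} (hu : u = (a : ℝ) / 2 ^ p)
    (hv : v = (b : ℝ) / 2 ^ q) (huv : u ≤ v) (hvT : v ≤ T) (m : ℕ) (ω : Ω) :
    Dd X u v ω ≤ (⌊v * 2 ^ m⌋₊ - ⌊u * 2 ^ m⌋₊ : ℕ) * xi T X m ω + 2 * Sm T X (m + 1) ω := by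
  have h0u : 0 ≤ u := by rw [hu]; positivity
  have h := chain_main X h0u huv hvT m ω (p + q)
  rw [hu, hv, gr_stab (by omega), gr_stab (by omega), ← hu, ← hv] at h
  refine h.trans (add_le_add_right (mul_le_mul_right ?_ 2) _)
  exact ENNReal.sum_le_tsum (Finset.range (p + q))

lemma xi_le_Sm {T : ℝ} (m : ℕ) (ω : Ω) : xi T X m ω ≤ Sm T X m ω := by
  have := ENNReal.le_tsum (f := fun i => xi T X (m + i) ω) 0
  simpa [Sm] using this

lemma Sm_succ_le {T : ℝ} (m : ℕ) (ω : Ω) : Sm T X (m + 1) ω ≤ Sm T X m ω := by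
  have h : Sm T X m ω = xi T X (m + 0) ω + ∑' i, xi T X (m + (i + 1)) ω :=
    tsum_eq_zero_add' ENNReal.summable
  have h2 : ∑' i, xi T X (m + (i + 1)) ω = Sm T X (m + 1) ω := by
    unfold Sm
    exact tsum_congr fun i => by rw [show m + (i + 1) = m + 1 + i by omega]
  rw [h, h2]
  exact le_add_self

lemma Sm_le_Zp {T γ : ℝ} (hγ : 0 < γ) (m : ℕ) (ω : Ω) :
    Sm T X m ω ≤ ENNReal.ofReal ((2 : ℝ) ^ (-(m : ℝ) * γ)) * Zp T γ X ω := by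
  have hterm : ∀ i : ℕ, xi T X (m + i) ω ≤
      ENNReal.ofReal ((2 : ℝ) ^ (-(m : ℝ) * γ)) *
        (ENNReal.ofReal ((2 : ℝ) ^ (((m + i : ℕ) : ℝ) * γ)) * xi T X (m + i) ω) := by
    intro i
    rw [← mul_assoc, ← ENNReal.ofReal_mul (by positivity)]
    nth_rewrite 1 [← one_mul (xi T X (m + i) ω)]
    refine mul_le_mul_left ?_ _
    rw [← ENNReal.ofReal_one]
    apply ENNReal.ofReal_le_ofReal
    rw [← Real.rpow_add two_pos]
    apply Real.one_le_rpow one_le_two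
    push_cast
    have hi : (0:ℝ) ≤ (i : ℝ) := Nat.cast_nonneg i
    nlinarith
  calc Sm T X m ω ≤ ∑' i : ℕ, ENNReal.ofReal ((2 : ℝ) ^ (-(m : ℝ) * γ)) *
        (ENNReal.ofReal ((2 : ℝ) ^ (((m + i : ℕ) : ℝ) * γ)) * xi T X (m + i) ω) :=
      Summable.tsum_le_tsum hterm ENNReal.summable ENNReal.summable
    _ = ENNReal.ofReal ((2 : ℝ) ^ (-(m : ℝ) * γ)) * ∑' i : ℕ,
        (ENNReal.ofReal ((2 : ℝ) ^ (((m + i : ℕ) : ℝ) * γ)) * xi T X (m + i) ω) :=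
      ENNReal.tsum_mul_left
    _ ≤ ENNReal.ofReal ((2 : ℝ) ^ (-(m : ℝ) * γ)) * Zp T γ X ω := by
      refine mul_le_mul_right ?_ _
      exact ENNReal.tsum_comp_le_tsum_of_injective (add_right_injective m)
        (fun j => ENNReal.ofReal ((2 : ℝ) ^ ((j : ℝ) * γ)) * xi T X j ω)

/-- the Hölder constant -/
noncomputable def c0 (T γ : ℝ) : ℝ := 4 * (T + 1) * (2 : ℝ) ^ γ

lemma c0_pos {T γ : ℝ} (hT : 0 < T) : 0 < c0 T γ := by
  unfold c0; positivity

lemma holder_grid {T γ : ℝ} (hT : 0 < T) (hγ : 0 < γ) {u v : ℝ} {a p b q : ℕ}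
    (hu : u = (a : ℝ) / 2 ^ p) (hv : v = (b : ℝ) / 2 ^ q)
    (huv : u ≤ v) (hvT : v ≤ T) (ω : Ω) :
    Dd X u v ω ≤ ENNReal.ofReal (c0 T γ * (v - u) ^ γ) * Zp T γ X ω := by
  have h0u : 0 ≤ u := by rw [hu]; positivity
  rcases eq_or_lt_of_le huv with rfl | hlt
  · rw [Dd_self]; exact zero_le
  have hvu : 0 < v - u := sub_pos.2 hlt
  -- generic step: from a real bound `cN` on the number of level-`m` steps and
  -- a real bound `cS ≥ 3` with `cN + 2 ≤ cS` ... we do the two cases directly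
  have key : ∀ m : ℕ, ∀ cN : ℝ, 0 ≤ cN →
      ((⌊v * 2 ^ m⌋₊ - ⌊u * 2 ^ m⌋₊ : ℕ) : ℝ) ≤ cN →
      Dd X u v ω ≤ ENNReal.ofReal ((cN + 2) * (2 : ℝ) ^ (-(m : ℝ) * γ)) * Zp T γ X ω := by
    intro m cN hcN0 hcN
    calc Dd X u v ω
        ≤ (⌊v * 2 ^ m⌋₊ - ⌊u * 2 ^ m⌋₊ : ℕ) * xi T X m ω + 2 * Sm T X (m + 1) ω :=
        dyadic_pair X hu hv huv hvT m ω
      _ ≤ ENNReal.ofReal cN * Sm T X m ω + ENNReal.ofReal 2 * Sm T X m ω := by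
        refine add_le_add (mul_le_mul' ?_ (xi_le_Sm X m ω)) ?_
        · rw [← ENNReal.ofReal_natCast]
          exact ENNReal.ofReal_le_ofReal hcN
        · rw [ENNReal.ofReal_ofNat]
          exact mul_le_mul_right (Sm_succ_le X m ω) 2
      _ = ENNReal.ofReal (cN + 2) * Sm T X m ω := by
        rw [ENNReal.ofReal_add hcN0 (by norm_num), add_mul]
      _ ≤ ENNReal.ofReal (cN + 2) * (ENNReal.ofReal ((2 : ℝ) ^ (-(m : ℝ) * γ)) * Zp T γ X ω) :=
        mul_le_mul_right (Sm_le_Zp X hγ m ω) _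
      _ = ENNReal.ofReal ((cN + 2) * (2 : ℝ) ^ (-(m : ℝ) * γ)) * Zp T γ X ω := by
        rw [← mul_assoc, ← ENNReal.ofReal_mul (by linarith)]
  rcases le_or_gt (v - u) 1 with hle1 | hgt1
  · -- small gap case
    set x := (v - u)⁻¹ with hx
    have hx1 : 1 ≤ x := (one_le_inv_iff₀.2 ⟨hvu, hle1⟩ : _)
    have hx0 : 0 < x := lt_of_lt_of_le one_pos hx1
    set m := ⌊Real.logb 2 x⌋₊ with hm
    have h2m : (2 : ℝ) ^ m ≤ x := by
      have h := Real.rpow_le_rpow_of_exponent_le one_le_two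
        (Nat.floor_le (Real.logb_nonneg one_lt_two hx1))
      rwa [Real.rpow_natCast, Real.rpow_logb two_pos (by norm_num) hx0] at h
    have h2m' : x < (2 : ℝ) ^ (m + 1) := by
      have h := Real.rpow_lt_rpow_of_exponent_lt one_lt_two
        (Nat.lt_floor_add_one (Real.logb 2 x))
      rw [Real.rpow_logb two_pos (by norm_num) hx0] at h
      calc x < (2:ℝ) ^ (((m : ℝ) + 1)) := h
        _ = (2:ℝ) ^ (m + 1) := by
          rw [← Real.rpow_natCast 2 (m+1)]; push_cast; ring_nf
    have hpm : (0:ℝ) < 2 ^ m := by positivity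
    have hvu1 : v - u ≤ ((2 : ℝ) ^ m)⁻¹ := by
      rw [← hx] at *
      rw [show v - u = x⁻¹ by rw [hx, inv_inv]]
      exact inv_anti₀ hpm h2m
    have hvu2 : ((2 : ℝ) ^ m)⁻¹ ≤ 2 * (v - u) := by
      have : x < 2 * 2 ^ m := by
        rw [pow_succ] at h2m'; linarith
      have h' : (2 * 2 ^ m)⁻¹ < x⁻¹ := by
        apply inv_strictAnti₀ hx0 this
      rw [hx, inv_inv] at h'
      rw [mul_inv] at h'
      nlinarith
    have hfd : ((⌊v * 2 ^ m⌋₊ - ⌊u * 2 ^ m⌋₊ : ℕ) : ℝ) ≤ 1 := by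
      have hd : ⌊v * 2 ^ m⌋₊ ≤ ⌊u * 2 ^ m⌋₊ + 1 := by
        have h1 : v * 2 ^ m ≤ u * 2 ^ m + 1 := by
          have : (v - u) * 2 ^ m ≤ 1 := by
            rw [← le_div_iff₀ hpm] at *
            calc (v-u) ≤ (2^m:ℝ)⁻¹ := hvu1
              _ = 1 / 2 ^ m := by rw [one_div]
          nlinarith
        calc ⌊v * 2 ^ m⌋₊ ≤ ⌊u * 2 ^ m + 1⌋₊ := Nat.floor_le_floor h1
          _ = ⌊u * 2 ^ m⌋₊ + 1 := Nat.floor_add_one (by positivity)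
      have : (⌊v * 2 ^ m⌋₊ - ⌊u * 2 ^ m⌋₊ : ℕ) ≤ 1 := by omega
      exact_mod_cast this
    refine (key m 1 one_pos.le hfd).trans ?_
    refine mul_le_mul_left (ENNReal.ofReal_le_ofReal ?_) _
    -- (1+2) * 2^{-mγ} ≤ c0 (v-u)^γ
    have e1 : (2 : ℝ) ^ (-(m : ℝ) * γ) = (((2:ℝ) ^ m)⁻¹) ^ γ := by
      rw [← Real.rpow_natCast 2 m, ← Real.rpow_neg_one, ← Real.rpow_mul two_pos.le,
        ← Real.rpow_mul two_pos.le]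
      ring_nf
    rw [e1]
    have h2 : (((2:ℝ) ^ m)⁻¹) ^ γ ≤ (2 * (v - u)) ^ γ :=
      Real.rpow_le_rpow (by positivity) hvu2 hγ.le
    have h3 : (2 * (v - u)) ^ γ = (2:ℝ) ^ γ * (v - u) ^ γ :=
      Real.mul_rpow (by norm_num) hvu.le
    have h4 : (0:ℝ) < (2:ℝ) ^ γ := Real.rpow_pos_of_pos two_pos γ
    have h5 : (0:ℝ) ≤ (v - u) ^ γ := Real.rpow_nonneg hvu.le γ
    rw [c0]
    have h8 : (0:ℝ) ≤ 2 ^ γ * (v - u) ^ γ := mul_nonneg h4.le h5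
    have h9 : (3:ℝ) * ((2^m:ℝ)⁻¹ ^ γ) ≤ 3 * (2 ^ γ * (v - u) ^ γ) := by nlinarith
    have h10 : (3:ℝ) * (2 ^ γ * (v - u) ^ γ) ≤ 4 * (T + 1) * (2 ^ γ * (v - u) ^ γ) := by nlinarith
    nlinarith
  · -- large gap case
    have hfd : ((⌊v * 2 ^ 0⌋₊ - ⌊u * 2 ^ 0⌋₊ : ℕ) : ℝ) ≤ 2 * (v - u) := by
      simp only [pow_zero, mul_one]
      have hmono : ⌊u⌋₊ ≤ ⌊v⌋₊ := Nat.floor_le_floor huv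
      rw [Nat.cast_sub hmono]
      have h1 : (⌊v⌋₊ : ℝ) ≤ v := Nat.floor_le (by linarith)
      have h2 : u < (⌊u⌋₊ : ℝ) + 1 := Nat.lt_floor_add_one u
      nlinarith
    refine (key 0 (2 * (v - u)) (by positivity) hfd).trans ?_
    refine mul_le_mul_left (ENNReal.ofReal_le_ofReal ?_) _
    have e1 : (2:ℝ) ^ (-((0:ℕ) : ℝ) * γ) = 1 := by
      push_cast
      rw [neg_zero, zero_mul, Real.rpow_zero]
    rw [e1, mul_one, c0]
    have hvuT : v - u ≤ T := by linarith [h0u, hvT]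
    have h4 : (1:ℝ) ≤ (2:ℝ) ^ γ := Real.one_le_rpow one_le_two hγ.le
    have h5 : (1:ℝ) ≤ (v - u) ^ γ := Real.one_le_rpow hgt1.le hγ.le
    have h6 : (0:ℝ) ≤ (v - u) ^ γ := by linarith
    have h7 : (1:ℝ) ≤ 2 ^ γ * (v - u) ^ γ := by nlinarith
    have h8 : 4 * (T+1) ≤ 4 * (T + 1) * (2 ^ γ * (v - u) ^ γ) := by nlinarith
    nlinarith

end Holder

lemma continuous_eNorm {n : ℕ} : Continuous (eNorm : (Fin n → ℝ) → ℝ) := by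
  unfold eNorm; fun_prop

lemma measurable_eNorm {n : ℕ} : Measurable (eNorm : (Fin n → ℝ) → ℝ) :=
  continuous_eNorm.measurable

section Moment
variable {n : ℕ} {Ω : Type*} [MeasurableSpace Ω] {μ : Measure Ω}
  {X : ℝ → Ω → Fin n → ℝ} {T α β γ K : ℝ}
set_option linter.unusedSectionVars false

lemma meas_Dd (hX : ∀ t, Measurable (X t)) (u v : ℝ) : Measurable (Dd X u v) :=
  ENNReal.measurable_ofReal.comp (measurable_eNorm.comp ((hX v).sub (hX u)))

lemma meas_xi (hX : ∀ t, Measurable (X t)) (j : ℕ) : Measurable (xi T X j) :=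
  Measurable.iSup fun k => Measurable.iSup fun _ => meas_Dd hX _ _

lemma meas_Zp (hX : ∀ t, Measurable (X t)) : Measurable (Zp T γ X) :=
  Measurable.ennreal_tsum fun j => (meas_xi hX j).const_mul _

lemma lint_Dd_pow (hα : 0 < α)
    (hmom : ∀ s ∈ Set.Icc (0:ℝ) T, ∀ t ∈ Set.Icc (0:ℝ) T,
      ∫⁻ ω, ENNReal.ofReal (eNorm (X t ω - X s ω) ^ α) ∂μ
        ≤ ENNReal.ofReal (K * |t - s| ^ (1 + β)))
    {u v : ℝ} (hu : u ∈ Set.Icc (0:ℝ) T) (hv : v ∈ Set.Icc (0:ℝ) T) :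
    ∫⁻ ω, (Dd X u v ω) ^ α ∂μ ≤ ENNReal.ofReal (K * |v - u| ^ (1 + β)) := by
  have h : ∀ ω, (Dd X u v ω) ^ α = ENNReal.ofReal (eNorm (X v ω - X u ω) ^ α) := fun ω =>
    ENNReal.ofReal_rpow_of_nonneg (eNorm_nonneg _) hα.le
  simp_rw [Dd] at h ⊢
  simp_rw [h]
  exact hmom u hu v hv

lemma grid_mem_Icc (hT : 0 < T) {j k : ℕ} (hk : k < ⌊T * 2 ^ j⌋₊) :
    ((k : ℝ) / 2 ^ j) ∈ Set.Icc (0:ℝ) T ∧ (((k : ℝ) + 1) / 2 ^ j) ∈ Set.Icc (0:ℝ) T := by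
  have hp : (0:ℝ) < 2 ^ j := by positivity
  have h1 : ((k : ℝ) + 1) ≤ T * 2 ^ j := by
    have : (k + 1 : ℕ) ≤ ⌊T * 2 ^ j⌋₊ := by omega
    have h2 : ((k + 1 : ℕ) : ℝ) ≤ (⌊T * 2 ^ j⌋₊ : ℝ) := by exact_mod_cast this
    calc ((k:ℝ) + 1) = ((k + 1 : ℕ) : ℝ) := by push_cast; ring
      _ ≤ (⌊T * 2 ^ j⌋₊ : ℝ) := h2
      _ ≤ T * 2 ^ j := Nat.floor_le (by positivity)
  constructor
  · exact ⟨by positivity, by rw [div_le_iff₀ hp]; nlinarith [(Nat.cast_nonneg k : (0:ℝ) ≤ (k:ℝ))]⟩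
  · exact ⟨by positivity, by rw [div_le_iff₀ hp]; linarith⟩

lemma lint_xi_pow (hT : 0 < T) (hα : 0 < α) (hβ : 0 < β) (hK : 0 < K)
    (hX : ∀ t, Measurable (X t))
    (hmom : ∀ s ∈ Set.Icc (0:ℝ) T, ∀ t ∈ Set.Icc (0:ℝ) T,
      ∫⁻ ω, ENNReal.ofReal (eNorm (X t ω - X s ω) ^ α) ∂μ
        ≤ ENNReal.ofReal (K * |t - s| ^ (1 + β)))
    (j : ℕ) :
    ∫⁻ ω, (xi T X j ω) ^ α ∂μ ≤ ENNReal.ofReal (K * T * (2:ℝ) ^ (-(j:ℝ) * β)) := by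
  have hp : (0:ℝ) < 2 ^ j := by positivity
  -- pointwise bound of xi^α by the sum of D^α
  have hpt : ∀ ω, (xi T X j ω) ^ α ≤
      ∑ k ∈ Finset.range ⌊T * 2 ^ j⌋₊,
        (Dd X ((k : ℝ) / 2 ^ j) (((k : ℝ) + 1) / 2 ^ j) ω) ^ α := by
    intro ω
    have h1 : xi T X j ω ≤ (∑ k ∈ Finset.range ⌊T * 2 ^ j⌋₊,
        (Dd X ((k : ℝ) / 2 ^ j) (((k : ℝ) + 1) / 2 ^ j) ω) ^ α) ^ (1/α) := by
      refine iSup₂_le fun k hk => ?_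
      have h2 : (Dd X ((k : ℝ) / 2 ^ j) (((k : ℝ) + 1) / 2 ^ j) ω) ^ α ≤
          ∑ k' ∈ Finset.range ⌊T * 2 ^ j⌋₊,
            (Dd X ((k' : ℝ) / 2 ^ j) (((k' : ℝ) + 1) / 2 ^ j) ω) ^ α :=
        Finset.single_le_sum (f := fun k' : ℕ => (Dd X ((k' : ℝ) / 2 ^ j)
          (((k' : ℝ) + 1) / 2 ^ j) ω) ^ α) (s := Finset.range ⌊T * 2 ^ j⌋₊)
          (fun _ _ => zero_le) (Finset.mem_range.2 hk)
      have h3 := ENNReal.rpow_le_rpow h2 (by positivity : (0:ℝ) ≤ 1/α)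
      rwa [← ENNReal.rpow_mul, mul_one_div, div_self hα.ne', ENNReal.rpow_one] at h3
    have h4 := ENNReal.rpow_le_rpow h1 hα.le
    rwa [← ENNReal.rpow_mul, one_div, inv_mul_cancel₀ hα.ne', ENNReal.rpow_one] at h4
  calc ∫⁻ ω, (xi T X j ω) ^ α ∂μ
      ≤ ∫⁻ ω, ∑ k ∈ Finset.range ⌊T * 2 ^ j⌋₊,
          (Dd X ((k : ℝ) / 2 ^ j) (((k : ℝ) + 1) / 2 ^ j) ω) ^ α ∂μ :=
        lintegral_mono hpt
    _ = ∑ k ∈ Finset.range ⌊T * 2 ^ j⌋₊,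
          ∫⁻ ω, (Dd X ((k : ℝ) / 2 ^ j) (((k : ℝ) + 1) / 2 ^ j) ω) ^ α ∂μ :=
        lintegral_finset_sum _ (fun k _ => (meas_Dd hX _ _).pow_const _)
    _ ≤ ∑ k ∈ Finset.range ⌊T * 2 ^ j⌋₊,
          ENNReal.ofReal (K * ((2:ℝ) ^ j)⁻¹ ^ (1 + β)) := by
        refine Finset.sum_le_sum fun k hk => ?_
        obtain ⟨hu, hv⟩ := grid_mem_Icc hT (Finset.mem_range.1 hk)
        have := lint_Dd_pow hα hmom hu hv
        have habs : |((k : ℝ) + 1) / 2 ^ j - (k : ℝ) / 2 ^ j| = ((2:ℝ) ^ j)⁻¹ := by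
          rw [div_sub_div_same]
          rw [show ((k:ℝ) + 1 - k) = 1 by ring]
          rw [abs_of_pos (by positivity)]
          rw [one_div]
        rwa [habs] at this
    _ = (⌊T * 2 ^ j⌋₊ : ℝ≥0∞) * ENNReal.ofReal (K * ((2:ℝ) ^ j)⁻¹ ^ (1 + β)) := by
        rw [Finset.sum_const, Finset.card_range, nsmul_eq_mul]
    _ ≤ ENNReal.ofReal (T * 2 ^ j) * ENNReal.ofReal (K * ((2:ℝ) ^ j)⁻¹ ^ (1 + β)) := by
        refine mul_le_mul_left ?_ _
        rw [← ENNReal.ofReal_natCast]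
        exact ENNReal.ofReal_le_ofReal (Nat.floor_le (by positivity))
    _ = ENNReal.ofReal (K * T * (2:ℝ) ^ (-(j:ℝ) * β)) := by
        rw [← ENNReal.ofReal_mul (by positivity)]
        congr 1
        have e1 : ((2:ℝ) ^ j)⁻¹ ^ (1 + β) = (2:ℝ) ^ (-(j:ℝ) * (1 + β)) := by
          rw [← Real.rpow_natCast 2 j, ← Real.rpow_neg_one ((2:ℝ) ^ (j:ℝ)),
            ← Real.rpow_mul two_pos.le, ← Real.rpow_mul two_pos.le]
          ring_nf
        rw [e1, ← Real.rpow_natCast 2 j]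
        rw [show T * (2:ℝ) ^ (j:ℝ) * (K * (2:ℝ) ^ (-(j:ℝ) * (1 + β)))
            = K * T * ((2:ℝ) ^ (j:ℝ) * (2:ℝ) ^ (-(j:ℝ) * (1 + β))) by ring]
        rw [← Real.rpow_add two_pos]
        congr 1
        ring

end Moment

section SumLemmas
open ENNReal


lemma rpow_sum_le {ι : Type*} (s : Finset ι) (f : ι → ℝ≥0∞) {p : ℝ} (hp : 0 < p) (hp1 : p ≤ 1) :
    (∑ i ∈ s, f i) ^ p ≤ ∑ i ∈ s, (f i) ^ p := by
  classical
  induction s using Finset.cons_induction with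
  | empty => simp [ENNReal.zero_rpow_of_pos hp]
  | cons a s ha ih =>
    rw [Finset.sum_cons, Finset.sum_cons]
    exact (ENNReal.rpow_add_le_add_rpow _ _ hp.le hp1).trans (add_le_add_right ih _)

lemma rpow_tsum_le (f : ℕ → ℝ≥0∞) {p : ℝ} (hp : 0 < p) (hp1 : p ≤ 1) :
    (∑' i, f i) ^ p ≤ ∑' i, (f i) ^ p := by
  have h1 : Tendsto (fun n => (∑ i ∈ Finset.range n, f i) ^ p) atTop (nhds ((∑' i, f i) ^ p)) :=
    (ENNReal.continuous_rpow_const.tendsto _).comp (ENNReal.tendsto_nat_tsum f)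
  refine le_of_tendsto h1 (Eventually.of_forall fun n => ?_)
  exact (rpow_sum_le _ _ hp hp1).trans (ENNReal.sum_le_tsum _)

lemma lintegral_Lp_tsum_le {Ω : Type*} [MeasurableSpace Ω] {μ : Measure Ω}
    (f : ℕ → Ω → ℝ≥0∞) (hf : ∀ i, Measurable (f i)) {p : ℝ} (hp : 1 ≤ p) :
    (∫⁻ ω, (∑' i, f i ω) ^ p ∂μ) ^ (1/p) ≤ ∑' i, (∫⁻ ω, (f i ω) ^ p ∂μ) ^ (1/p) := by
  have hp0 : 0 < p := lt_of_lt_of_le one_pos hp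
  have hfin : ∀ n, (∫⁻ ω, (∑ i ∈ Finset.range n, f i ω) ^ p ∂μ) ^ (1/p)
      ≤ ∑ i ∈ Finset.range n, (∫⁻ ω, (f i ω) ^ p ∂μ) ^ (1/p) := by
    intro n
    induction n with
    | zero =>
      simp [ENNReal.zero_rpow_of_pos hp0, ENNReal.zero_rpow_of_pos (by positivity : (0:ℝ) < 1/p),
        hp0]
    | succ n ih =>
      have hmeas : Measurable (fun ω => ∑ i ∈ Finset.range n, f i ω) :=
        Finset.measurable_sum _ fun i _ => hf i
      calc (∫⁻ ω, (∑ i ∈ Finset.range (n+1), f i ω) ^ p ∂μ) ^ (1/p)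
          = (∫⁻ ω, (((fun ω => ∑ i ∈ Finset.range n, f i ω) + f n) ω) ^ p ∂μ) ^ (1/p) := by
            simp [Finset.sum_range_succ]
        _ ≤ (∫⁻ ω, (∑ i ∈ Finset.range n, f i ω) ^ p ∂μ) ^ (1/p)
              + (∫⁻ ω, (f n ω) ^ p ∂μ) ^ (1/p) :=
            ENNReal.lintegral_Lp_add_le hmeas.aemeasurable (hf n).aemeasurable hp
        _ ≤ ∑ i ∈ Finset.range (n+1), (∫⁻ ω, (f i ω) ^ p ∂μ) ^ (1/p) := by
            rw [Finset.sum_range_succ]; exact add_le_add ih le_rfl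
  -- monotone convergence
  have hmono : ∀ ω, Monotone (fun n => (∑ i ∈ Finset.range n, f i ω) ^ p) := by
    intro ω m k hmk
    exact ENNReal.rpow_le_rpow (Finset.sum_le_sum_of_subset (Finset.range_subset_range.2 hmk)) hp0.le
  have hsup : ∀ ω, (∑' i, f i ω) ^ p = ⨆ n, (∑ i ∈ Finset.range n, f i ω) ^ p := by
    intro ω
    have ht : Tendsto (fun n => (∑ i ∈ Finset.range n, f i ω) ^ p) atTop
        (nhds ((∑' i, f i ω) ^ p)) :=
      (ENNReal.continuous_rpow_const.tendsto _).comp (ENNReal.tendsto_nat_tsum _)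
    exact tendsto_nhds_unique ht (tendsto_atTop_iSup (hmono ω))
  have hMCT : ∫⁻ ω, (∑' i, f i ω) ^ p ∂μ = ⨆ n, ∫⁻ ω, (∑ i ∈ Finset.range n, f i ω) ^ p ∂μ := by
    simp_rw [hsup]
    exact lintegral_iSup (fun n => (Finset.measurable_sum _ fun i _ => hf i).pow_const _)
      (fun m k hmk => fun ω => hmono ω hmk)
  rw [hMCT]
  have : (⨆ n, ∫⁻ ω, (∑ i ∈ Finset.range n, f i ω) ^ p ∂μ)
      ≤ (∑' i, (∫⁻ ω, (f i ω) ^ p ∂μ) ^ (1/p)) ^ p := by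
    refine iSup_le fun n => ?_
    have h2 : (∫⁻ ω, (∑ i ∈ Finset.range n, f i ω) ^ p ∂μ)
        ≤ (∑ i ∈ Finset.range n, (∫⁻ ω, (f i ω) ^ p ∂μ) ^ (1/p)) ^ p := by
      have := ENNReal.rpow_le_rpow (hfin n) hp0.le
      rwa [← ENNReal.rpow_mul, one_div, inv_mul_cancel₀ hp0.ne', ENNReal.rpow_one, ← one_div]
        at this
    exact h2.trans (ENNReal.rpow_le_rpow (ENNReal.sum_le_tsum _) hp0.le)
  calc (⨆ n, ∫⁻ ω, (∑ i ∈ Finset.range n, f i ω) ^ p ∂μ) ^ (1/p)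
      ≤ ((∑' i, (∫⁻ ω, (f i ω) ^ p ∂μ) ^ (1/p)) ^ p) ^ (1/p) :=
        ENNReal.rpow_le_rpow this (by positivity)
    _ = ∑' i, (∫⁻ ω, (f i ω) ^ p ∂μ) ^ (1/p) := by
        rw [← ENNReal.rpow_mul, mul_one_div, div_self hp0.ne', ENNReal.rpow_one]

end SumLemmas

section ZpMoment
variable {n : ℕ} {Ω : Type*} [MeasurableSpace Ω] {μ : Measure Ω}
  {X : ℝ → Ω → Fin n → ℝ} {T α β γ K : ℝ}
set_option linter.unusedSectionVars false

lemma two_rpow_lt_one {x : ℝ} (hx : x < 0) : (2:ℝ) ^ x < 1 := by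
  calc (2:ℝ) ^ x < 2 ^ (0:ℝ) := Real.rpow_lt_rpow_of_exponent_lt one_lt_two hx
    _ = 1 := Real.rpow_zero 2

lemma geom_sum_ofReal {r : ℝ} (hr0 : 0 ≤ r) (hr1 : r < 1) (c : ℝ) (hc : 0 ≤ c) :
    ∑' j : ℕ, ENNReal.ofReal (c * r ^ j) ≤ ENNReal.ofReal (c / (1 - r)) := by
  have h1 : ∀ j : ℕ, ENNReal.ofReal (c * r ^ j)
      = ENNReal.ofReal c * (ENNReal.ofReal r) ^ j := by
    intro j
    rw [ENNReal.ofReal_mul hc, ENNReal.ofReal_pow hr0]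
  simp_rw [h1]
  rw [ENNReal.tsum_mul_left, ENNReal.tsum_geometric]
  have h2 : (1 : ℝ≥0∞) - ENNReal.ofReal r = ENNReal.ofReal (1 - r) := by
    rw [← ENNReal.ofReal_one, ← ENNReal.ofReal_sub _ hr0]
  rw [h2, ← ENNReal.ofReal_inv_of_pos (by linarith), ← ENNReal.ofReal_mul hc, ← div_eq_mul_inv]

lemma lint_Zp_rpow_le_one (hT : 0 < T) (hα : 0 < α) (hα1 : α ≤ 1) (hβ : 0 < β)
    (hγ : 0 < γ) (hK : 0 < K) (hγβ : γ * α < β)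
    (hX : ∀ t, Measurable (X t))
    (hmom : ∀ s ∈ Set.Icc (0:ℝ) T, ∀ t ∈ Set.Icc (0:ℝ) T,
      ∫⁻ ω, ENNReal.ofReal (eNorm (X t ω - X s ω) ^ α) ∂μ
        ≤ ENNReal.ofReal (K * |t - s| ^ (1 + β)))
    : ∫⁻ ω, (Zp T γ X ω) ^ α ∂μ
      ≤ ENNReal.ofReal (K * T / (1 - (2:ℝ) ^ (γ * α - β))) := by
  have hterm : ∀ j : ℕ, ∀ ω, (ENNReal.ofReal ((2:ℝ) ^ ((j:ℝ) * γ)) * xi T X j ω) ^ α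
      = ENNReal.ofReal ((2:ℝ) ^ ((j:ℝ) * γ * α)) * (xi T X j ω) ^ α := by
    intro j ω
    rw [ENNReal.mul_rpow_of_nonneg _ _ hα.le,
      ENNReal.ofReal_rpow_of_nonneg (by positivity) hα.le, ← Real.rpow_mul two_pos.le]
  calc ∫⁻ ω, (Zp T γ X ω) ^ α ∂μ
      ≤ ∫⁻ ω, ∑' j : ℕ, (ENNReal.ofReal ((2:ℝ) ^ ((j:ℝ) * γ)) * xi T X j ω) ^ α ∂μ := by
        refine lintegral_mono fun ω => ?_
        exact rpow_tsum_le _ hα hα1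
    _ = ∑' j : ℕ, ∫⁻ ω, (ENNReal.ofReal ((2:ℝ) ^ ((j:ℝ) * γ)) * xi T X j ω) ^ α ∂μ :=
        lintegral_tsum fun j => (((meas_xi hX j).const_mul _).pow_const _).aemeasurable
    _ ≤ ∑' j : ℕ, ENNReal.ofReal ((K * T) * ((2:ℝ) ^ (γ * α - β)) ^ j) := by
        refine ENNReal.tsum_le_tsum fun j => ?_
        simp_rw [hterm j]
        rw [lintegral_const_mul _ ((meas_xi hX j).pow_const _)]
        calc ENNReal.ofReal ((2:ℝ) ^ ((j:ℝ) * γ * α)) * ∫⁻ ω, (xi T X j ω) ^ α ∂μ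
            ≤ ENNReal.ofReal ((2:ℝ) ^ ((j:ℝ) * γ * α))
              * ENNReal.ofReal (K * T * (2:ℝ) ^ (-(j:ℝ) * β)) :=
            mul_le_mul_right (lint_xi_pow hT hα hβ hK hX hmom j) _
          _ = ENNReal.ofReal (K * T * ((2:ℝ) ^ (γ * α - β)) ^ j) := by
            rw [← ENNReal.ofReal_mul (by positivity)]
            congr 1
            rw [← Real.rpow_natCast ((2:ℝ) ^ (γ * α - β)) j, ← Real.rpow_mul two_pos.le]
            rw [show (2:ℝ) ^ ((j:ℝ) * γ * α) * (K * T * (2:ℝ) ^ (-(j:ℝ) * β))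
                = K * T * ((2:ℝ) ^ ((j:ℝ) * γ * α) * (2:ℝ) ^ (-(j:ℝ) * β)) by ring]
            rw [← Real.rpow_add two_pos]
            congr 1
            ring
    _ ≤ ENNReal.ofReal (K * T / (1 - (2:ℝ) ^ (γ * α - β))) :=
        geom_sum_ofReal (by positivity) (two_rpow_lt_one (by linarith)) _ (by positivity)

end ZpMoment

section ZpMoment2
variable {n : ℕ} {Ω : Type*} [MeasurableSpace Ω] {μ : Measure Ω}
  {X : ℝ → Ω → Fin n → ℝ} {T α β γ K : ℝ}
set_option linter.unusedSectionVars false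

lemma lint_Zp_rpow_ge_one (hT : 0 < T) (hα1 : 1 ≤ α) (hβ : 0 < β)
    (hγ : 0 < γ) (hK : 0 < K) (hγβ : γ < β / α)
    (hX : ∀ t, Measurable (X t))
    (hmom : ∀ s ∈ Set.Icc (0:ℝ) T, ∀ t ∈ Set.Icc (0:ℝ) T,
      ∫⁻ ω, ENNReal.ofReal (eNorm (X t ω - X s ω) ^ α) ∂μ
        ≤ ENNReal.ofReal (K * |t - s| ^ (1 + β)))
    : ∫⁻ ω, (Zp T γ X ω) ^ α ∂μ
      ≤ ENNReal.ofReal ((((K * T) ^ (1/α)) / (1 - (2:ℝ) ^ (γ - β / α))) ^ α) := by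
  have hα : (0:ℝ) < α := lt_of_lt_of_le one_pos hα1
  have hsum := lintegral_Lp_tsum_le (μ := μ)
    (fun j ω => ENNReal.ofReal ((2:ℝ) ^ ((j:ℝ) * γ)) * xi T X j ω)
    (fun j => (meas_xi hX j).const_mul _) hα1
  have hterm : ∀ j : ℕ,
      (∫⁻ ω, (ENNReal.ofReal ((2:ℝ) ^ ((j:ℝ) * γ)) * xi T X j ω) ^ α ∂μ) ^ (1/α)
      ≤ ENNReal.ofReal ((K * T) ^ (1/α) * ((2:ℝ) ^ (γ - β / α)) ^ j) := by
    intro j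
    have h1 : ∀ ω, (ENNReal.ofReal ((2:ℝ) ^ ((j:ℝ) * γ)) * xi T X j ω) ^ α
        = ENNReal.ofReal ((2:ℝ) ^ ((j:ℝ) * γ * α)) * (xi T X j ω) ^ α := fun ω => by
      rw [ENNReal.mul_rpow_of_nonneg _ _ hα.le,
        ENNReal.ofReal_rpow_of_nonneg (by positivity) hα.le, ← Real.rpow_mul two_pos.le]
    simp_rw [h1]
    rw [lintegral_const_mul _ ((meas_xi hX j).pow_const _)]
    calc (ENNReal.ofReal ((2:ℝ) ^ ((j:ℝ) * γ * α)) * ∫⁻ ω, (xi T X j ω) ^ α ∂μ) ^ (1/α)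
        ≤ (ENNReal.ofReal ((2:ℝ) ^ ((j:ℝ) * γ * α))
            * ENNReal.ofReal (K * T * (2:ℝ) ^ (-(j:ℝ) * β))) ^ (1/α) :=
        ENNReal.rpow_le_rpow (mul_le_mul_right (lint_xi_pow hT hα hβ hK hX hmom j) _)
          (by positivity)
      _ = ENNReal.ofReal ((K * T) ^ (1/α) * ((2:ℝ) ^ (γ - β / α)) ^ j) := by
        rw [← ENNReal.ofReal_mul (by positivity),
          ENNReal.ofReal_rpow_of_nonneg (by positivity) (by positivity)]
        congr 1
        rw [← Real.rpow_natCast ((2:ℝ) ^ (γ - β / α)) j, ← Real.rpow_mul two_pos.le]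
        rw [show (2:ℝ) ^ ((j:ℝ) * γ * α) * (K * T * (2:ℝ) ^ (-(j:ℝ) * β))
            = K * T * ((2:ℝ) ^ ((j:ℝ) * γ * α) * (2:ℝ) ^ (-(j:ℝ) * β)) by ring,
          ← Real.rpow_add two_pos]
        rw [Real.mul_rpow (by positivity) (by positivity), ← Real.rpow_mul two_pos.le]
        congr 1
        field_simp
        ring
  have hgeo : ∑' j : ℕ, ENNReal.ofReal ((K * T) ^ (1/α) * ((2:ℝ) ^ (γ - β / α)) ^ j)
      ≤ ENNReal.ofReal (((K * T) ^ (1/α)) / (1 - (2:ℝ) ^ (γ - β / α))) :=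
    geom_sum_ofReal (by positivity) (two_rpow_lt_one (by linarith)) _ (by positivity)
  have hfinal : (∫⁻ ω, (Zp T γ X ω) ^ α ∂μ) ^ (1/α)
      ≤ ENNReal.ofReal (((K * T) ^ (1/α)) / (1 - (2:ℝ) ^ (γ - β / α))) := by
    refine le_trans ?_ ((ENNReal.tsum_le_tsum hterm).trans hgeo)
    exact hsum
  have h2 := ENNReal.rpow_le_rpow hfinal hα.le
  have hden : (0:ℝ) < 1 - (2:ℝ) ^ (γ - β / α) := by
    have := two_rpow_lt_one (show γ - β / α < 0 by linarith)
    linarith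
  rw [← ENNReal.rpow_mul, one_div, inv_mul_cancel₀ hα.ne', ENNReal.rpow_one,
    ENNReal.ofReal_rpow_of_nonneg (div_nonneg (by positivity) hden.le) hα.le] at h2
  simpa [one_div] using h2

end ZpMoment2

section Construction
open Classical
variable {n : ℕ} {Ω : Type*} [MeasurableSpace Ω] {μ : Measure Ω}
  {X : ℝ → Ω → Fin n → ℝ} {T α β γ K : ℝ}
set_option linter.unusedSectionVars false

/-- the modification: limit along dyadic approximations, if it exists -/
noncomputable def Xmod (X : ℝ → Ω → Fin n → ℝ) (t : ℝ) (ω : Ω) : Fin n → ℝ :=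
  if h : ∃ L, Tendsto (fun m => X (gr m t) ω) atTop (nhds L) then h.choose else 0

lemma tendsto_gr {r : ℝ} (hr : 0 ≤ r) : Tendsto (fun m => gr m r) atTop (nhds r) := by
  have h1 : ∀ m : ℕ, |gr m r - r| ≤ ((2:ℝ)^m)⁻¹ := by
    intro m
    rw [abs_sub_comm, abs_of_nonneg (by linarith [gr_le hr m])]
    linarith [le_gr_add m r]
  have h2 : Tendsto (fun m : ℕ => ((2:ℝ)^m)⁻¹) atTop (nhds 0) := by
    simp_rw [← one_div]
    exact tendsto_one_div_atTop_nhds_zero_nat.comp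
      (tendsto_pow_atTop_atTop_of_one_lt (by norm_num) : Tendsto (fun m : ℕ => 2^m) atTop atTop)
      |>.congr (by intro m; simp)
  rw [Metric.tendsto_atTop]
  intro ε hε
  rw [Metric.tendsto_atTop] at h2
  obtain ⟨N, hN⟩ := h2 ε hε
  exact ⟨N, fun m hm => by
    have := hN m hm
    rw [Real.dist_eq] at this ⊢
    simp only [sub_zero] at this
    calc |gr m r - r| ≤ ((2:ℝ)^m)⁻¹ := h1 m
      _ ≤ |((2:ℝ)^m)⁻¹| := le_abs_self _
      _ < ε := this⟩

/-- real-valued Hölder estimate over grid points -/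
lemma enorm_grid_bound (hT : 0 < T) (hγ : 0 < γ) {ω : Ω} (hω : Zp T γ X ω ≠ ⊤)
    {u v : ℝ} {a p b q : ℕ} (hu : u = (a : ℝ) / 2 ^ p) (hv : v = (b : ℝ) / 2 ^ q)
    (huv : u ≤ v) (hvT : v ≤ T) :
    eNorm (X v ω - X u ω) ≤ c0 T γ * (Zp T γ X ω).toReal * (v - u) ^ γ := by
  have h := holder_grid X hT hγ hu hv huv hvT ω
  have h2 : (Dd X u v ω).toReal ≤ (ENNReal.ofReal (c0 T γ * (v - u) ^ γ) * Zp T γ X ω).toReal :=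
    ENNReal.toReal_mono (by
      exact ENNReal.mul_ne_top ENNReal.ofReal_ne_top hω) h
  rw [Dd, ENNReal.toReal_ofReal (eNorm_nonneg _), ENNReal.toReal_mul,
    ENNReal.toReal_ofReal (mul_nonneg (c0_pos hT).le (Real.rpow_nonneg (by linarith) γ))] at h2
  calc eNorm (X v ω - X u ω) ≤ c0 T γ * (v - u) ^ γ * (Zp T γ X ω).toReal := h2
    _ = c0 T γ * (Zp T γ X ω).toReal * (v - u) ^ γ := by ring

lemma tendsto_Xmod (hT : 0 < T) (hγ : 0 < γ) {ω : Ω} (hω : Zp T γ X ω ≠ ⊤)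
    {t : ℝ} (ht : t ∈ Set.Icc 0 T) :
    Tendsto (fun m => X (gr m t) ω) atTop (nhds (Xmod X t ω)) := by
  have hc0 := c0_pos (γ := γ) hT
  have hcs : CauchySeq (fun m => X (gr m t) ω) := by
    refine cauchySeq_of_le_tendsto_0
      (fun N => c0 T γ * (Zp T γ X ω).toReal * (((2:ℝ)^N)⁻¹) ^ γ) ?_ ?_
    · intro a b N ha hb
      -- symmetric helper
      have key : ∀ a b : ℕ, N ≤ a → N ≤ b → gr a t ≤ gr b t →
          dist (X (gr a t) ω) (X (gr b t) ω)
            ≤ c0 T γ * (Zp T γ X ω).toReal * (((2:ℝ)^N)⁻¹) ^ γ := by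
        intro a b ha hb hab
        have h1 : gr b t - gr a t ≤ ((2:ℝ)^N)⁻¹ := by
          have h2 : t ≤ gr a t + ((2:ℝ)^a)⁻¹ := le_gr_add a t
          have h3 : gr b t ≤ t := gr_le ht.1 b
          have h4 : ((2:ℝ)^a)⁻¹ ≤ ((2:ℝ)^N)⁻¹ := by
            apply inv_anti₀ (by positivity)
            exact pow_le_pow_right₀ one_le_two ha
          linarith
        have h5 : eNorm (X (gr b t) ω - X (gr a t) ω)
            ≤ c0 T γ * (Zp T γ X ω).toReal * (gr b t - gr a t) ^ γ :=
          enorm_grid_bound hT hγ hω rfl rfl hab (le_trans (gr_le ht.1 b) ht.2)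
        have h6 : (gr b t - gr a t) ^ γ ≤ (((2:ℝ)^N)⁻¹) ^ γ :=
          Real.rpow_le_rpow (by linarith) h1 hγ.le
        calc dist (X (gr a t) ω) (X (gr b t) ω)
            ≤ eNorm (X (gr b t) ω - X (gr a t) ω) := by
              rw [dist_comm]; exact dist_le_eNorm _ _
          _ ≤ c0 T γ * (Zp T γ X ω).toReal * (gr b t - gr a t) ^ γ := h5
          _ ≤ c0 T γ * (Zp T γ X ω).toReal * (((2:ℝ)^N)⁻¹) ^ γ := by
              have : 0 ≤ c0 T γ * (Zp T γ X ω).toReal := by positivity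
              nlinarith
      rcases le_total (gr a t) (gr b t) with h | h
      · exact key a b ha hb h
      · rw [dist_comm]; exact key b a hb ha h
    · have hbase : Tendsto (fun N : ℕ => ((((2:ℝ)^γ)⁻¹) ^ N)) atTop (nhds 0) := by
        apply tendsto_pow_atTop_nhds_zero_of_lt_one
        · positivity
        · rw [inv_lt_one_iff₀]
          right
          exact Real.one_lt_rpow_iff_of_pos two_pos |>.2 (Or.inl ⟨one_lt_two, hγ⟩)
      have heq : ∀ N : ℕ, (((2:ℝ)^N)⁻¹) ^ γ = (((2:ℝ)^γ)⁻¹) ^ N := by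
        intro N
        have e1 : (((2:ℝ)^N)⁻¹) ^ γ = (2:ℝ) ^ (-((N:ℝ) * γ)) := by
          rw [← Real.rpow_natCast 2 N, ← Real.rpow_neg two_pos.le, ← Real.rpow_mul two_pos.le,
            neg_mul]
        have e2 : (((2:ℝ)^γ)⁻¹) ^ N = (2:ℝ) ^ (-(γ * (N:ℝ))) := by
          rw [← Real.rpow_neg two_pos.le, ← Real.rpow_natCast ((2:ℝ)^(-γ)) N,
            ← Real.rpow_mul two_pos.le, neg_mul]
        rw [e1, e2, mul_comm]
      simp_rw [heq]
      have := hbase.const_mul (c0 T γ * (Zp T γ X ω).toReal)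
      simpa using this
  obtain ⟨L, hL⟩ := cauchySeq_tendsto_of_complete hcs
  have hex : ∃ L, Tendsto (fun m => X (gr m t) ω) atTop (nhds L) := ⟨L, hL⟩
  simp only [Xmod]
  rw [dif_pos hex]
  exact hex.choose_spec

end Construction

section Limits
variable {n : ℕ} {Ω : Type*} [MeasurableSpace Ω] {μ : Measure Ω}
  {X : ℝ → Ω → Fin n → ℝ} {T α β γ K : ℝ}
set_option linter.unusedSectionVars false

lemma pow_inv_rpow (c : ℝ) (N : ℕ) : (((2:ℝ)^N)⁻¹) ^ c = (((2:ℝ)^c)⁻¹) ^ N := by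
  have e1 : (((2:ℝ)^N)⁻¹) ^ c = (2:ℝ) ^ (-((N:ℝ) * c)) := by
    rw [← Real.rpow_natCast 2 N, ← Real.rpow_neg two_pos.le, ← Real.rpow_mul two_pos.le, neg_mul]
  have e2 : (((2:ℝ)^c)⁻¹) ^ N = (2:ℝ) ^ (-(c * (N:ℝ))) := by
    rw [← Real.rpow_neg two_pos.le, ← Real.rpow_natCast ((2:ℝ)^(-c)) N,
      ← Real.rpow_mul two_pos.le, neg_mul]
  rw [e1, e2, mul_comm]

lemma holder_Xmod (hT : 0 < T) (hγ : 0 < γ) {ω : Ω} (hω : Zp T γ X ω ≠ ⊤)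
    {s t : ℝ} (hs : s ∈ Set.Icc 0 T) (ht : t ∈ Set.Icc 0 T) (hst : s ≤ t) :
    eNorm (Xmod X t ω - Xmod X s ω) ≤ c0 T γ * (Zp T γ X ω).toReal * (t - s) ^ γ := by
  have hLt := tendsto_Xmod hT hγ hω ht
  have hLs := tendsto_Xmod hT hγ hω hs
  have hL : Tendsto (fun m => eNorm (X (gr m t) ω - X (gr m s) ω)) atTop
      (nhds (eNorm (Xmod X t ω - Xmod X s ω))) :=
    (continuous_eNorm.tendsto _).comp (hLt.sub hLs)
  have hgr_mono : ∀ m : ℕ, gr m s ≤ gr m t := by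
    intro m
    have hp : (0:ℝ) < 2 ^ m := by positivity
    have : ⌊s * 2 ^ m⌋₊ ≤ ⌊t * 2 ^ m⌋₊ :=
      Nat.floor_le_floor (mul_le_mul_of_nonneg_right hst hp.le)
    have hc : ((⌊s * 2 ^ m⌋₊ : ℕ) : ℝ) ≤ ((⌊t * 2 ^ m⌋₊ : ℕ) : ℝ) := by exact_mod_cast this
    rw [gr, gr]
    gcongr
  have hR : Tendsto (fun m => c0 T γ * (Zp T γ X ω).toReal * (gr m t - gr m s) ^ γ) atTop
      (nhds (c0 T γ * (Zp T γ X ω).toReal * (t - s) ^ γ)) := by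
    apply Tendsto.const_mul
    exact (Real.continuousAt_rpow_const (t - s) γ (Or.inr hγ.le)).tendsto.comp
      ((tendsto_gr ht.1).sub (tendsto_gr hs.1))
  refine le_of_tendsto_of_tendsto' hL hR fun m => ?_
  exact enorm_grid_bound hT hγ hω rfl rfl (hgr_mono m) (le_trans (gr_le ht.1 m) ht.2)

lemma ae_tendsto_grid (hT : 0 < T) (hα : 0 < α) (hβ : 0 < β) (hK : 0 < K)
    (hX : ∀ t, Measurable (X t))
    (hmom : ∀ s ∈ Set.Icc (0:ℝ) T, ∀ t ∈ Set.Icc (0:ℝ) T,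
      ∫⁻ ω, ENNReal.ofReal (eNorm (X t ω - X s ω) ^ α) ∂μ
        ≤ ENNReal.ofReal (K * |t - s| ^ (1 + β)))
    {t : ℝ} (ht : t ∈ Set.Icc 0 T) :
    ∀ᵐ ω ∂μ, Tendsto (fun m => X (gr m t) ω) atTop (nhds (X t ω)) := by
  set e : ℕ → Ω → ℝ := fun m ω => eNorm (X (gr m t) ω - X t ω) with he
  have key : ∀ ε : ℝ, 0 < ε → μ (limsup (fun m => {ω | ε ≤ e m ω}) atTop) = 0 := by
    intro ε hε
    apply measure_limsup_atTop_eq_zero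
    have hr0 : (0:ℝ) ≤ (((2:ℝ)^(1+β))⁻¹) := by positivity
    have hr1 : (((2:ℝ)^(1+β))⁻¹) < 1 := by
      rw [inv_lt_one_iff₀]
      right
      exact Real.one_lt_rpow_iff_of_pos two_pos |>.2 (Or.inl ⟨one_lt_two, by linarith⟩)
    have hm : ∀ m : ℕ, μ {ω | ε ≤ e m ω}
        ≤ ENNReal.ofReal (K * (((2:ℝ)^(1+β))⁻¹) ^ m) * (ENNReal.ofReal (ε ^ α))⁻¹ := by
      intro m
      have hsub : {ω | ε ≤ e m ω} ⊆ {ω | ENNReal.ofReal (ε ^ α) ≤ ENNReal.ofReal (e m ω ^ α)} := by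
        intro ω hω
        exact ENNReal.ofReal_le_ofReal (Real.rpow_le_rpow hε.le hω hα.le)
      have hmeas : Measurable fun ω => ENNReal.ofReal (e m ω ^ α) := by
        apply ENNReal.measurable_ofReal.comp
        apply Measurable.pow_const
        exact measurable_eNorm.comp ((hX (gr m t)).sub (hX t))
      have hmark := meas_ge_le_lintegral_div (μ := μ) hmeas.aemeasurable
        (ε := ENNReal.ofReal (ε ^ α))
        (by simp [ENNReal.ofReal_eq_zero, not_le]; positivity) ENNReal.ofReal_ne_top
      have hint : ∫⁻ ω, ENNReal.ofReal (e m ω ^ α) ∂μ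
          ≤ ENNReal.ofReal (K * (((2:ℝ)^(1+β))⁻¹) ^ m) := by
        have hgr : gr m t ∈ Set.Icc (0:ℝ) T :=
          ⟨gr_nonneg m t, le_trans (gr_le ht.1 m) ht.2⟩
        refine (hmom t ht (gr m t) hgr).trans (ENNReal.ofReal_le_ofReal ?_)
        rw [← pow_inv_rpow (1+β) m]
        have habs : |gr m t - t| ≤ ((2:ℝ)^m)⁻¹ := by
          rw [abs_sub_comm, abs_of_nonneg (by linarith [gr_le ht.1 m])]
          linarith [le_gr_add m t]
        have := Real.rpow_le_rpow (abs_nonneg _) habs (by linarith : (0:ℝ) ≤ 1 + β)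
        nlinarith [Real.rpow_nonneg (abs_nonneg (gr m t - t)) (1+β)]
      calc μ {ω | ε ≤ e m ω} ≤ μ {ω | ENNReal.ofReal (ε ^ α) ≤ ENNReal.ofReal (e m ω ^ α)} :=
            measure_mono hsub
        _ ≤ (∫⁻ ω, ENNReal.ofReal (e m ω ^ α) ∂μ) / ENNReal.ofReal (ε ^ α) := hmark
        _ ≤ ENNReal.ofReal (K * (((2:ℝ)^(1+β))⁻¹) ^ m) / ENNReal.ofReal (ε ^ α) :=
            ENNReal.div_le_div_right hint _
        _ = ENNReal.ofReal (K * (((2:ℝ)^(1+β))⁻¹) ^ m) * (ENNReal.ofReal (ε ^ α))⁻¹ := by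
            rw [div_eq_mul_inv]
    refine ne_top_of_le_ne_top ?_ (ENNReal.tsum_le_tsum hm)
    rw [ENNReal.tsum_mul_right]
    apply ENNReal.mul_ne_top
    · exact ne_top_of_le_ne_top ENNReal.ofReal_ne_top
        (geom_sum_ofReal hr0 hr1 K hK.le)
    · rw [ENNReal.inv_ne_top]
      simp [ENNReal.ofReal_eq_zero, not_le]
      positivity
  have hae : ∀ᵐ ω ∂μ, ∀ k : ℕ, ∀ᶠ m in atTop, e m ω < 1 / ((k:ℝ) + 1) := by
    rw [ae_all_iff]
    intro k
    have h0 : (0:ℝ) < 1 / ((k:ℝ) + 1) := by positivity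
    have h1 := key _ h0
    rw [measure_eq_zero_iff_ae_notMem] at h1
    filter_upwards [h1] with ω hω
    rw [mem_limsup_iff_frequently_mem] at hω
    have h2 := (Filter.not_frequently.1 hω)
    filter_upwards [h2] with m hm
    simpa [not_le] using hm
  filter_upwards [hae] with ω hω
  rw [Metric.tendsto_atTop]
  intro ε hε
  obtain ⟨k, hk⟩ := exists_nat_one_div_lt hε
  obtain ⟨N, hN⟩ := Filter.eventually_atTop.1 (hω k)
  refine ⟨N, fun m hm => ?_⟩
  calc dist (X (gr m t) ω) (X t ω) ≤ eNorm (X (gr m t) ω - X t ω) := dist_le_eNorm _ _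
    _ < 1 / ((k:ℝ) + 1) := hN m hm
    _ < ε := hk

end Limits

theorem stmt_3 (T α β γ K C : ℝ) (hT : 0 < T) (hα : 0 < α) (hβ : 0 < β)
    (hγ : 0 < γ) (hK : 0 < K) (hC : 0 < C) (hγβα : γ < β / α) :
    ∃ A : ℝ → ℝ, (∀ M : ℝ, 0 ≤ M → A M ∈ Set.Icc (0 : ℝ) 1) ∧
      Tendsto A atTop (nhds 0) ∧
      ∀ (n : ℕ), 1 ≤ n →
      ∀ (Ω : Type*) (_ : MeasurableSpace Ω) (μ : Measure Ω), IsProbabilityMeasure μ →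
      ∀ X : ℝ → Ω → (Fin n → ℝ),
        (∀ t, Measurable (X t)) →
        (∀ s ∈ Set.Icc (0 : ℝ) T, ∀ t ∈ Set.Icc (0 : ℝ) T,
          ∫⁻ ω, ENNReal.ofReal (eNorm (X t ω - X s ω) ^ α) ∂μ
            ≤ ENNReal.ofReal (K * |t - s| ^ (1 + β))) →
        (∫⁻ ω, ⨆ (t : ℝ) (_ : t ∈ Set.Icc (0 : ℝ) T ∩ dyadics),
            ENNReal.ofReal (eNorm (X t ω)) ∂μ ≤ ENNReal.ofReal C) →
        ∃ Xmod : ℝ → Ω → (Fin n → ℝ),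
          (∀ t ∈ Set.Icc (0 : ℝ) T, ∀ᵐ ω ∂μ, Xmod t ω = X t ω) ∧
          (∀ᵐ ω ∂μ, ∃ c : ℝ, ∀ s ∈ Set.Icc (0 : ℝ) T, ∀ t ∈ Set.Icc (0 : ℝ) T,
            eNorm (Xmod t ω - Xmod s ω) ≤ c * |t - s| ^ γ) ∧
          ∀ M : ℝ, 0 ≤ M →
            μ {ω | ENNReal.ofReal M <
                ENNReal.ofReal (eNorm (Xmod 0 ω)) +
                  ⨆ (s : ℝ) (t : ℝ) (_ : 0 ≤ s) (_ : s < t) (_ : t ≤ T),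
                    ENNReal.ofReal (eNorm (Xmod t ω - Xmod s ω) / (t - s) ^ γ)}
              ≤ ENNReal.ofReal (A M) := by
  have hγαβ : γ * α < β := (lt_div_iff₀ hα).1 hγβα
  set c₀ := c0 T γ with hc₀def
  have hc₀ : 0 < c₀ := c0_pos hT
  set Breal : ℝ := if α ≤ 1 then K * T / (1 - (2:ℝ) ^ (γ * α - β))
    else (((K * T) ^ (1/α)) / (1 - (2:ℝ) ^ (γ - β / α))) ^ α with hBdef
  have hB0 : 0 ≤ Breal := by
    rw [hBdef]; split_ifs with h
    · apply div_nonneg (by positivity)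
      have := two_rpow_lt_one (show γ * α - β < 0 by linarith)
      linarith
    · apply Real.rpow_nonneg
      apply div_nonneg (by positivity)
      have := two_rpow_lt_one (show γ - β / α < 0 by linarith)
      linarith
  set g : ℝ → ℝ := fun M => 2 * C / M + Breal / ((M / (2 * c₀)) ^ α) with hgdef
  have hg0 : ∀ M : ℝ, 1 < M → 0 ≤ g M := by
    intro M hM
    apply add_nonneg
    · apply div_nonneg (by positivity) (by linarith)
    · exact div_nonneg hB0 (Real.rpow_nonneg (div_nonneg (by linarith) (by positivity)) α)
  refine ⟨fun M => if M ≤ 1 then 1 else min 1 (g M), ?_, ?_, ?_⟩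
  · intro M hM
    dsimp only
    by_cases h : M ≤ 1
    · rw [if_pos h]; exact ⟨zero_le_one, le_refl 1⟩
    · rw [if_neg h]
      push_neg at h
      exact ⟨le_min zero_le_one (hg0 M h), min_le_left _ _⟩
  · have hgt : Tendsto g atTop (nhds 0) := by
      rw [hgdef]
      have h1 : Tendsto (fun M : ℝ => 2 * C / M) atTop (nhds 0) :=
        Tendsto.const_div_atTop tendsto_id _
      have h2 : Tendsto (fun M : ℝ => Breal / ((M / (2 * c₀)) ^ α)) atTop (nhds 0) :=
        Tendsto.const_div_atTop ((tendsto_rpow_atTop hα).comp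
          (tendsto_id.atTop_div_const (by positivity))) _
      simpa using h1.add h2
    apply tendsto_of_tendsto_of_tendsto_of_le_of_le' tendsto_const_nhds hgt
    · filter_upwards [eventually_gt_atTop 1] with M hM
      rw [if_neg (not_le.2 hM)]
      exact le_min zero_le_one (hg0 M hM)
    · filter_upwards [eventually_gt_atTop 1] with M hM
      rw [if_neg (not_le.2 hM)]
      exact min_le_right _ _
  · intro n hn Ω mΩ μ hμ X hX hmom hsup
    have hZm : ∫⁻ ω, (Zp T γ X ω) ^ α ∂μ ≤ ENNReal.ofReal Breal := by
      rw [hBdef]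
      split_ifs with h
      · exact lint_Zp_rpow_le_one hT hα h hβ hγ hK hγαβ hX hmom
      · exact lint_Zp_rpow_ge_one hT (le_of_not_ge h) hβ hγ hK hγβα hX hmom
    have hZae : ∀ᵐ ω ∂μ, Zp T γ X ω ≠ ⊤ := by
      have h1 : ∫⁻ ω, (Zp T γ X ω) ^ α ∂μ ≠ ⊤ :=
        ne_top_of_le_ne_top ENNReal.ofReal_ne_top hZm
      filter_upwards [ae_lt_top ((meas_Zp hX).pow_const α) h1] with ω hω
      intro hcon
      rw [hcon, ENNReal.top_rpow_of_pos hα] at hω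
      exact lt_irrefl _ hω
    have hmod : ∀ t ∈ Set.Icc (0:ℝ) T, ∀ᵐ ω ∂μ, Xmod X t ω = X t ω := by
      intro t ht
      filter_upwards [ae_tendsto_grid hT hα hβ hK hX hmom ht, hZae] with ω h1 h2
      exact tendsto_nhds_unique (tendsto_Xmod hT hγ h2 ht) h1
    refine ⟨Xmod X, hmod, ?_, ?_⟩
    · filter_upwards [hZae] with ω hω
      refine ⟨c₀ * (Zp T γ X ω).toReal, fun s hs t ht => ?_⟩
      rcases le_total s t with h | h
      · rw [abs_of_nonneg (by linarith)]
        exact holder_Xmod hT hγ hω hs ht h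
      · rw [abs_of_nonpos (by linarith), eNorm_sub_comm]
        have h2 := holder_Xmod hT hγ hω ht hs h
        rw [neg_sub]
        exact h2
    · intro M hM
      dsimp only
      by_cases h1 : M ≤ 1
      · rw [if_pos h1]
        refine le_trans prob_le_one ?_
        simp
      · rw [if_neg h1]
        push_neg at h1
        have hMhalf : (0:ℝ) < M / 2 := by linarith
        set S1 := {ω | ENNReal.ofReal (M/2) < ENNReal.ofReal (eNorm (X 0 ω))} with hS1
        set S2 := {ω | ENNReal.ofReal (M/2) < ENNReal.ofReal c₀ * Zp T γ X ω} with hS2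
        set N1 := {ω | ¬ Xmod X 0 ω = X 0 ω} with hN1
        set N2 := {ω | ¬ Zp T γ X ω ≠ ⊤} with hN2
        have hN1z : μ N1 = 0 := ae_iff.1 (hmod 0 ⟨le_refl 0, hT.le⟩)
        have hN2z : μ N2 = 0 := ae_iff.1 hZae
        -- bound on the Hölder supremum
        have hsupb : ∀ ω : Ω, Zp T γ X ω ≠ ⊤ →
            (⨆ (s : ℝ) (t : ℝ) (_ : 0 ≤ s) (_ : s < t) (_ : t ≤ T),
              ENNReal.ofReal (eNorm (Xmod X t ω - Xmod X s ω) / (t - s) ^ γ))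
              ≤ ENNReal.ofReal c₀ * Zp T γ X ω := by
          intro ω hω
          refine iSup_le fun s => iSup_le fun t => iSup_le fun hs => iSup_le fun hst =>
            iSup_le fun htT => ?_
          have hts : (0:ℝ) < t - s := by linarith
          have hpow : (0:ℝ) < (t - s) ^ γ := Real.rpow_pos_of_pos hts γ
          have hH := holder_Xmod (X := X) hT hγ hω ⟨hs, by linarith⟩ ⟨by linarith, htT⟩ hst.le
          have hdiv : eNorm (Xmod X t ω - Xmod X s ω) / (t - s) ^ γ
              ≤ c₀ * (Zp T γ X ω).toReal := by
            rw [div_le_iff₀ hpow]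
            calc eNorm (Xmod X t ω - Xmod X s ω)
                ≤ c0 T γ * (Zp T γ X ω).toReal * (t - s) ^ γ := hH
              _ = c₀ * (Zp T γ X ω).toReal * (t - s) ^ γ := by rw [hc₀def]
          calc ENNReal.ofReal (eNorm (Xmod X t ω - Xmod X s ω) / (t - s) ^ γ)
              ≤ ENNReal.ofReal (c₀ * (Zp T γ X ω).toReal) := ENNReal.ofReal_le_ofReal hdiv
            _ = ENNReal.ofReal c₀ * ENNReal.ofReal ((Zp T γ X ω).toReal) :=
              ENNReal.ofReal_mul hc₀.le
            _ = ENNReal.ofReal c₀ * Zp T γ X ω := by rw [ENNReal.ofReal_toReal hω]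
        have hincl : {ω | ENNReal.ofReal M <
              ENNReal.ofReal (eNorm (Xmod X 0 ω)) +
                ⨆ (s : ℝ) (t : ℝ) (_ : 0 ≤ s) (_ : s < t) (_ : t ≤ T),
                  ENNReal.ofReal (eNorm (Xmod X t ω - Xmod X s ω) / (t - s) ^ γ)}
            ⊆ (S1 ∪ S2) ∪ (N1 ∪ N2) := by
          intro ω hω
          by_contra hcon
          simp only [Set.mem_union, not_or] at hcon
          obtain ⟨⟨hωS1, hωS2⟩, hωN1, hωN2⟩ := hcon
          rw [hN1, Set.mem_setOf_eq, not_not] at hωN1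
          rw [hN2, Set.mem_setOf_eq, not_not] at hωN2
          rw [hS1, Set.mem_setOf_eq, not_lt] at hωS1
          rw [hS2, Set.mem_setOf_eq, not_lt] at hωS2
          rw [Set.mem_setOf_eq] at hω
          have hb1 : ENNReal.ofReal (eNorm (Xmod X 0 ω)) ≤ ENNReal.ofReal (M/2) := by
            rw [hωN1]; exact hωS1
          have hb2 := le_trans (hsupb ω hωN2) hωS2
          have := lt_of_lt_of_le hω (add_le_add hb1 hb2)
          rw [← ENNReal.ofReal_add (by linarith) (by linarith),
            show M/2 + M/2 = M by ring] at this
          exact lt_irrefl _ this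
        have hint0 : ∫⁻ ω, ENNReal.ofReal (eNorm (X 0 ω)) ∂μ ≤ ENNReal.ofReal C := by
          refine le_trans (lintegral_mono fun ω => ?_) hsup
          have hmem : (0:ℝ) ∈ Set.Icc (0:ℝ) T ∩ dyadics :=
            ⟨⟨le_refl 0, hT.le⟩, 0, 0, by norm_num⟩
          exact le_iSup₂ (f := fun (t:ℝ) (_ : t ∈ Set.Icc (0:ℝ) T ∩ dyadics) =>
            ENNReal.ofReal (eNorm (X t ω))) 0 hmem
        have hS1m : μ S1 ≤ ENNReal.ofReal (2 * C / M) := by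
          have hsub : S1 ⊆ {ω | ENNReal.ofReal (M/2) ≤ ENNReal.ofReal (eNorm (X 0 ω))} := by
            intro ω h
            rw [hS1, Set.mem_setOf_eq] at h
            exact le_of_lt h
          have hmark := meas_ge_le_lintegral_div (μ := μ)
            (ENNReal.measurable_ofReal.comp (measurable_eNorm.comp (hX 0))).aemeasurable
            (ε := ENNReal.ofReal (M/2))
            (by simp only [ne_eq, ENNReal.ofReal_eq_zero, not_le]; linarith)
            ENNReal.ofReal_ne_top
          calc μ S1 ≤ μ {ω | ENNReal.ofReal (M/2) ≤ ENNReal.ofReal (eNorm (X 0 ω))} :=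
              measure_mono hsub
            _ ≤ (∫⁻ ω, ENNReal.ofReal (eNorm (X 0 ω)) ∂μ) / ENNReal.ofReal (M/2) := hmark
            _ ≤ ENNReal.ofReal C / ENNReal.ofReal (M/2) := ENNReal.div_le_div_right hint0 _
            _ = ENNReal.ofReal (C / (M/2)) := (ENNReal.ofReal_div_of_pos hMhalf).symm
            _ = ENNReal.ofReal (2 * C / M) := by congr 1; field_simp
        have hq : (0:ℝ) < M / (2 * c₀) := div_pos (by linarith) (by positivity)
        have hS2m : μ S2 ≤ ENNReal.ofReal (Breal / ((M / (2 * c₀)) ^ α)) := by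
          have hsub : S2 ⊆ {ω | ENNReal.ofReal ((M/(2*c₀))^α) ≤ (Zp T γ X ω) ^ α} := by
            intro ω h
            rw [hS2, Set.mem_setOf_eq] at h
            rw [Set.mem_setOf_eq]
            have h2 : ENNReal.ofReal (M/(2*c₀)) ≤ Zp T γ X ω := by
              have h3 : ENNReal.ofReal (M/2) ≤ ENNReal.ofReal c₀ * Zp T γ X ω := le_of_lt h
              have h4 : ENNReal.ofReal (M/(2*c₀)) = ENNReal.ofReal (M/2) / ENNReal.ofReal c₀ := by
                rw [← ENNReal.ofReal_div_of_pos hc₀]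
                congr 1
                field_simp
              rw [h4]
              apply ENNReal.div_le_of_le_mul
              rwa [mul_comm]
            have h5 := ENNReal.rpow_le_rpow h2 hα.le
            rwa [ENNReal.ofReal_rpow_of_nonneg hq.le hα.le] at h5
          have hmark := meas_ge_le_lintegral_div (μ := μ)
            ((meas_Zp (T := T) (γ := γ) hX).pow_const α).aemeasurable
            (ε := ENNReal.ofReal ((M/(2*c₀))^α))
            (by simp only [ne_eq, ENNReal.ofReal_eq_zero, not_le]; positivity)
            ENNReal.ofReal_ne_top
          calc μ S2 ≤ μ {ω | ENNReal.ofReal ((M/(2*c₀))^α) ≤ (Zp T γ X ω) ^ α} :=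
              measure_mono hsub
            _ ≤ (∫⁻ ω, (Zp T γ X ω) ^ α ∂μ) / ENNReal.ofReal ((M/(2*c₀))^α) := hmark
            _ ≤ ENNReal.ofReal Breal / ENNReal.ofReal ((M/(2*c₀))^α) :=
              ENNReal.div_le_div_right hZm _
            _ = ENNReal.ofReal (Breal / ((M/(2*c₀))^α)) :=
              (ENNReal.ofReal_div_of_pos (Real.rpow_pos_of_pos hq α)).symm
        have hfin : μ {ω | ENNReal.ofReal M <
              ENNReal.ofReal (eNorm (Xmod X 0 ω)) +
                ⨆ (s : ℝ) (t : ℝ) (_ : 0 ≤ s) (_ : s < t) (_ : t ≤ T),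
                  ENNReal.ofReal (eNorm (Xmod X t ω - Xmod X s ω) / (t - s) ^ γ)}
            ≤ ENNReal.ofReal (g M) := by
          calc μ _ ≤ μ ((S1 ∪ S2) ∪ (N1 ∪ N2)) := measure_mono hincl
            _ ≤ (μ S1 + μ S2) + (μ N1 + μ N2) := le_trans (measure_union_le _ _)
                (add_le_add (measure_union_le _ _) (measure_union_le _ _))
            _ = μ S1 + μ S2 := by rw [hN1z, hN2z, add_zero, add_zero]
            _ ≤ ENNReal.ofReal (2 * C / M) + ENNReal.ofReal (Breal / ((M / (2 * c₀)) ^ α)) :=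
              add_le_add hS1m hS2m
            _ = ENNReal.ofReal (g M) := by
              rw [← ENNReal.ofReal_add (div_nonneg (by positivity) (by linarith))
                (div_nonneg hB0 (Real.rpow_nonneg hq.le α))]
        rcases le_total 1 (g M) with h | h
        · rw [min_eq_left h]
          refine le_trans prob_le_one ?_
          simp
        · rw [min_eq_right h]
          exact hfin
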